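/- Neither N_{pq²} nor the dihedral group D_{2pq} has a normal subgroup P of prime power order (including the trivial subgroup) such that the corresponding quotient group is cyclic. -/

import Mathlib

open Multiplicative

namespace Mizerka

/-- The standing hypotheses: `p` and `q` are odd primes with `q ∣ p - 1`, and `i` is a
natural number with `i ≡ 1 (mod q)` whose multiplicative order modulo `p` equals `q`. -/
structure Hyp (p q i : ℕ) : Prop where
  hp : Nat.Prime p
  hq : Nat.Prime q
  hoddp : Odd p
  hoddq : Odd q
  hdvd : q ∣ p - 1
  hmod : i ≡ 1 [MOD q]
  hord : orderOf (i : ZMod p) = q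

namespace Hyp

variable {p q i : ℕ}

theorem coprime_q (h : Hyp p q i) : Nat.Coprime i q := by
  have h1 : i % q = 1 % q := h.hmod
  unfold Nat.Coprime
  rw [Nat.gcd_comm, Nat.gcd_rec, h1, ← Nat.gcd_rec, Nat.gcd_one_right]

theorem coprime_p (h : Hyp p q i) : Nat.Coprime i p := by
  haveI : NeZero p := ⟨h.hp.ne_zero⟩
  have hq1 : q - 1 + 1 = q := Nat.succ_pred_eq_of_pos h.hq.pos
  have hmul : (i : ZMod p) * (i : ZMod p) ^ (q - 1) = 1 := by
    rw [← pow_succ', hq1, ← h.hord, pow_orderOf_eq_one]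
  exact (ZMod.isUnit_iff_coprime i p).mp (IsUnit.of_mul_eq_one _ hmul)

theorem coprime (h : Hyp p q i) : Nat.Coprime i (p * q) :=
  Nat.Coprime.mul_right h.coprime_p h.coprime_q

theorem pow_q_modeq (h : Hyp p q i) : i ^ q ≡ 1 [MOD p * q] := by
  have hpq : p ≠ q := by
    have h1 : 0 < p - 1 := by have := h.hp.two_le; omega
    have := Nat.le_of_dvd h1 h.hdvd
    omega
  have hc : Nat.Coprime p q := (Nat.coprime_primes h.hp h.hq).mpr hpq
  rw [← Nat.modEq_and_modEq_iff_modEq_mul hc]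
  constructor
  · haveI : NeZero p := ⟨h.hp.ne_zero⟩
    have hcast : ((i ^ q : ℕ) : ZMod p) = ((1 : ℕ) : ZMod p) := by
      push_cast
      rw [← h.hord, pow_orderOf_eq_one]
    exact (ZMod.natCast_eq_natCast_iff _ _ _).mp hcast
  · calc i ^ q ≡ 1 ^ q [MOD q] := h.hmod.pow q
      _ = 1 := one_pow q

/-- The unit of `ZMod (p*q)` determined by `i`. -/
def unit (h : Hyp p q i) : (ZMod (p * q))ˣ := ZMod.unitOfCoprime i h.coprime

/-- The unit of `ZMod p` determined by `i`. -/
def unitP (h : Hyp p q i) : (ZMod p)ˣ := ZMod.unitOfCoprime i h.coprime_p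

theorem unit_pow (h : Hyp p q i) : h.unit ^ q = 1 := by
  apply Units.ext
  have h2 : ((i ^ q : ℕ) : ZMod (p * q)) = ((1 : ℕ) : ZMod (p * q)) :=
    (ZMod.natCast_eq_natCast_iff _ _ _).mpr h.pow_q_modeq
  push_cast at h2
  simpa [Hyp.unit] using h2

theorem unitP_pow (h : Hyp p q i) : h.unitP ^ q = 1 := by
  apply Units.ext
  have h2 : (i : ZMod p) ^ q = 1 := by rw [← h.hord]; exact pow_orderOf_eq_one _
  simpa [Hyp.unitP] using h2

end Hyp

/-- Multiplication by a unit, as an automorphism of the (multiplicatively written)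
cyclic group `ZMod n`. -/
def zmodMulAut (n : ℕ) : (ZMod n)ˣ →* MulAut (Multiplicative (ZMod n)) where
  toFun u :=
    { toFun := fun x => ofAdd ((u : ZMod n) * x.toAdd)
      invFun := fun x => ofAdd (((u⁻¹ : (ZMod n)ˣ) : ZMod n) * x.toAdd)
      left_inv := fun x => by simp
      right_inv := fun x => by simp
      map_mul' := fun x y => by simp [mul_add, ← ofAdd_add] }
  map_one' := by ext x; simp
  map_mul' u v := by ext x; simp [mul_assoc]

/-- The function underlying the automorphism of the dihedral group induced by
multiplication by a unit on the rotation part. -/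
def dihedralAutFun (n : ℕ) (u : (ZMod n)ˣ) : DihedralGroup n → DihedralGroup n
  | .r j => .r ((u : ZMod n) * j)
  | .sr j => .sr ((u : ZMod n) * j)

/-- Multiplication of indices by a unit, as an automorphism of the dihedral group:
`a ↦ a^u`, `b ↦ b`. -/
def dihedralAut (n : ℕ) : (ZMod n)ˣ →* MulAut (DihedralGroup n) where
  toFun u :=
    { toFun := dihedralAutFun n u
      invFun := dihedralAutFun n u⁻¹
      left_inv := fun x => by cases x <;> simp [dihedralAutFun]
      right_inv := fun x => by cases x <;> simp [dihedralAutFun]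
      map_mul' := fun x y => by cases x <;> cases y <;> simp [dihedralAutFun, mul_add, mul_sub] }
  map_one' := by ext x; cases x <;> simp [dihedralAutFun]
  map_mul' u v := by ext x; cases x <;> simp [dihedralAutFun, mul_assoc]

/-- The homomorphism `ZMod q →* G` (written multiplicatively) sending `1` to a fixed
element `g` with `g ^ q = 1`. -/
def zmodPow {G : Type*} [Group G] (q : ℕ) [NeZero q] (g : G) (hg : g ^ q = 1) :
    Multiplicative (ZMod q) →* G where
  toFun x := g ^ (toAdd x).val
  map_one' := by
    show g ^ (toAdd (1 : Multiplicative (ZMod q))).val = 1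
    rw [toAdd_one, ZMod.val_zero, pow_zero]
  map_mul' x y := by
    have key : ∀ m : ℕ, g ^ (m % q) = g ^ m := fun m => by
      conv_rhs => rw [← Nat.div_add_mod m q]
      rw [pow_add, pow_mul, hg, one_pow, one_mul]
    show g ^ (toAdd (x * y)).val = g ^ (toAdd x).val * g ^ (toAdd y).val
    rw [toAdd_mul, ZMod.val_add, key, pow_add]

namespace Hyp

variable {p q i : ℕ}

/-- The action of `C_q` on `C_{pq}` sending the generator to multiplication by `i`. -/
def phiN (h : Hyp p q i) : Multiplicative (ZMod q) →* MulAut (Multiplicative (ZMod (p * q))) :=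
  haveI : NeZero q := ⟨h.hq.ne_zero⟩
  zmodPow q (zmodMulAut (p * q) h.unit) (by rw [← map_pow, h.unit_pow, map_one])

/-- The action of `C_q` on `D_{2pq}` sending the generator to `τ` (`τ(a) = a^i`, `τ(b) = b`). -/
def phiG (h : Hyp p q i) : Multiplicative (ZMod q) →* MulAut (DihedralGroup (p * q)) :=
  haveI : NeZero q := ⟨h.hq.ne_zero⟩
  zmodPow q (dihedralAut (p * q) h.unit) (by rw [← map_pow, h.unit_pow, map_one])

/-- The action of `C_q` on `C_p` sending the generator to multiplication by `i`. -/
def phiF (h : Hyp p q i) : Multiplicative (ZMod q) →* MulAut (Multiplicative (ZMod p)) :=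
  haveI : NeZero q := ⟨h.hq.ne_zero⟩
  zmodPow q (zmodMulAut p h.unitP) (by rw [← map_pow, h.unitP_pow, map_one])

end Hyp

/-- The group `N_{pq²} = ⟨a, c ∣ a^{pq} = c^q = 1, c a c⁻¹ = a^i⟩ = C_{pq} ⋊ C_q`. -/
abbrev Npq2 {p q i : ℕ} (h : Hyp p q i) : Type :=
  Multiplicative (ZMod (p * q)) ⋊[h.phiN] Multiplicative (ZMod q)

/-- The group `G_{p,q} = D_{2pq} ⋊_φ C_q`. -/
abbrev Gpq {p q i : ℕ} (h : Hyp p q i) : Type :=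
  DihedralGroup (p * q) ⋊[h.phiG] Multiplicative (ZMod q)

/-- The Frobenius group `F_{p,q} = C_p ⋊ C_q` (the nonabelian group of order `pq`). -/
abbrev Fpq {p q i : ℕ} (h : Hyp p q i) : Type :=
  Multiplicative (ZMod p) ⋊[h.phiF] Multiplicative (ZMod q)

variable {p q i : ℕ}

/-- The generator `a` of `N_{pq²}`. -/
def aN (h : Hyp p q i) : Npq2 h := SemidirectProduct.inl (ofAdd 1)

/-- The generator `c` of `N_{pq²}`. -/
def cN (h : Hyp p q i) : Npq2 h := SemidirectProduct.inr (ofAdd 1)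

/-- The generator `a` of `G_{p,q}`. -/
def aG (h : Hyp p q i) : Gpq h := SemidirectProduct.inl (DihedralGroup.r 1)

/-- The generator `b` of `G_{p,q}`. -/
def bG (h : Hyp p q i) : Gpq h := SemidirectProduct.inl (DihedralGroup.sr 0)

/-- The generator `c` of `G_{p,q}`. -/
def cG (h : Hyp p q i) : Gpq h := SemidirectProduct.inr (ofAdd 1)

/-- The real conjugacy class `(g)^± = (g) ∪ (g⁻¹)`. -/
def realClass {G : Type*} [Group G] (g : G) : Set G := {x | IsConj g x ∨ IsConj g⁻¹ x}

/-- `N` is a normal subgroup whose quotient is an `ℓ`-group (the quotient has `ℓ`-power order,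
i.e. `N` has `ℓ`-power index). -/
def OQuot {G : Type*} [Group G] (ℓ : ℕ) (N : Subgroup G) : Prop :=
  N.Normal ∧ ∃ k : ℕ, N.index = ℓ ^ k

/-- `H` is a large subgroup of `G`: it contains `O^ℓ(G)`, the smallest normal subgroup
with `ℓ`-group quotient, for some prime `ℓ`. -/
def IsLarge {G : Type*} [Group G] (H : Subgroup G) : Prop :=
  ∃ ℓ : ℕ, Nat.Prime ℓ ∧
    ∃ N : Subgroup G, OQuot ℓ N ∧ (∀ M : Subgroup G, OQuot ℓ M → N ≤ M) ∧ N ≤ H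

section Reps

variable {k : Type*} [CommSemiring k] {G : Type*} [Group G]

/-- The subspace `V^H` of `H`-fixed vectors of a representation. -/
def fixedPts {V : Type*} [AddCommMonoid V] [Module k V]
    (ρ : Representation k G V) (H : Subgroup G) : Submodule k V where
  carrier := {v | ∀ g ∈ H, ρ g v = v}
  add_mem' := by
    intro a b ha hb g hg
    rw [map_add, ha g hg, hb g hg]
  zero_mem' := by
    intro g hg
    rw [map_zero]
  smul_mem' := by
    intro c v hv g hg
    rw [map_smul, hv g hg]

end Reps

/-- The weak gap condition for a real representation: `dim V^P ≥ 2 dim V^H` for all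
`P < H ≤ G` with `P` of prime power order. -/
def WeakGap {G : Type*} [Group G] {V : Type*} [AddCommGroup V] [Module ℝ V]
    (ρ : Representation ℝ G V) : Prop :=
  ∀ P H : Subgroup G, P < H → (∃ ℓ k : ℕ, Nat.Prime ℓ ∧ Nat.card P = ℓ ^ k) →
    2 * Module.finrank ℝ (fixedPts ρ H) ≤ Module.finrank ℝ (fixedPts ρ P)

/-- Isomorphism of real representations: an equivariant linear equivalence. -/
def RepIso {G : Type*} [Group G] {U V : Type*} [AddCommGroup U] [Module ℝ U]
    [AddCommGroup V] [Module ℝ V]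
    (ρU : Representation ℝ G U) (ρV : Representation ℝ G V) : Prop :=
  ∃ e : U ≃ₗ[ℝ] V, ∀ (g : G) (u : U), e (ρU g u) = ρV g (e u)

/-- Two real representations are `𝒫`-matched if their restrictions to every subgroup of
prime power order are isomorphic. -/
def PMatched {G : Type*} [Group G] {U V : Type*} [AddCommGroup U] [Module ℝ U]
    [AddCommGroup V] [Module ℝ V]
    (ρU : Representation ℝ G U) (ρV : Representation ℝ G V) : Prop :=
  ∀ P : Subgroup G, (∃ ℓ k : ℕ, Nat.Prime ℓ ∧ Nat.card P = ℓ ^ k) →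
    RepIso (ρU.comp P.subtype) (ρV.comp P.subtype)

/-- A bundled finite-dimensional-free real representation of `G`. -/
structure RealRep (G : Type*) [Group G] where
  carrier : Type
  [acg : AddCommGroup carrier]
  [mod : Module ℝ carrier]
  rho : Representation ℝ G carrier

attribute [instance] RealRep.acg RealRep.mod

theorem dihedralAut_pow_r (n : ℕ) (u : (ZMod n)ˣ) (k : ℕ) (m : ZMod n) :
    ((dihedralAut n u) ^ k) (DihedralGroup.r m)
      = DihedralGroup.r (((u ^ k : (ZMod n)ˣ) : ZMod n) * m) := by
  induction k generalizing m with
  | zero => simp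
  | succ k ih =>
    rw [pow_succ, MulAut.mul_apply]
    have h1 : (dihedralAut n u) (DihedralGroup.r m) = DihedralGroup.r ((u : ZMod n) * m) := rfl
    rw [h1, ih, pow_succ, Units.val_mul, mul_assoc]

theorem Hyp.phiG_r (h : Hyp p q i) (z : Multiplicative (ZMod q)) (m : ZMod (p * q)) :
    h.phiG z (DihedralGroup.r m)
      = DihedralGroup.r (((h.unit ^ (toAdd z).val : (ZMod (p * q))ˣ) : ZMod (p * q)) * m) := by
  have h1 : h.phiG z = (dihedralAut (p * q) h.unit) ^ (toAdd z).val := rfl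
  rw [h1, dihedralAut_pow_r]

theorem r_inv (n : ℕ) (m : ZMod n) : (DihedralGroup.r m)⁻¹ = DihedralGroup.r (-m) := rfl

/-- The subgroup `N_{pq²} = {(aˡ, cᵐ)}` of `G_{p,q}`. -/
def NSub (h : Hyp p q i) : Subgroup (Gpq h) where
  carrier := {x | ∃ l : ZMod (p * q), x.left = DihedralGroup.r l}
  one_mem' := ⟨0, rfl⟩
  mul_mem' := by
    rintro x y ⟨lx, hx⟩ ⟨ly, hy⟩
    refine ⟨lx + (h.unit ^ (toAdd x.right).val : (ZMod (p * q))ˣ) * ly, ?_⟩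
    rw [SemidirectProduct.mul_left, hx, hy, h.phiG_r, DihedralGroup.r_mul_r]
  inv_mem' := by
    rintro x ⟨lx, hx⟩
    refine ⟨-((h.unit ^ (toAdd x.right⁻¹).val : (ZMod (p * q))ˣ) * lx), ?_⟩
    rw [SemidirectProduct.inv_left, hx, r_inv, h.phiG_r]
    congr 1
    ring

/-- The subgroup `N_{2pq} = {(bᵉaˡ, 1)} ≅ D_{2pq}` of `G_{p,q}`. -/
def N2pqSub (h : Hyp p q i) : Subgroup (Gpq h) :=
  MonoidHom.ker SemidirectProduct.rightHom

/-- The subgroup `N¹_{pq} = {(aˡ, 1)}` of `G_{p,q}`. -/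
def NpqOneSub (h : Hyp p q i) : Subgroup (Gpq h) where
  carrier := {x | x.right = 1 ∧ ∃ l : ZMod (p * q), x.left = DihedralGroup.r l}
  one_mem' := ⟨rfl, 0, rfl⟩
  mul_mem' := by
    rintro x y ⟨hx1, lx, hx⟩ ⟨hy1, ly, hy⟩
    refine ⟨by rw [SemidirectProduct.mul_right, hx1, hy1, mul_one],
      lx + (h.unit ^ (toAdd x.right).val : (ZMod (p * q))ˣ) * ly, ?_⟩
    rw [SemidirectProduct.mul_left, hx, hy, h.phiG_r, DihedralGroup.r_mul_r]
  inv_mem' := by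
    rintro x ⟨hx1, lx, hx⟩
    refine ⟨by rw [SemidirectProduct.inv_right, hx1, inv_one],
      -((h.unit ^ (toAdd x.right⁻¹).val : (ZMod (p * q))ˣ) * lx), ?_⟩
    rw [SemidirectProduct.inv_left, hx, r_inv, h.phiG_r]
    congr 1
    ring

/-- The subgroup `N²_{pq} = {(a^{qs}, cᵐ)}` of `G_{p,q}`. -/
def NpqTwoSub (h : Hyp p q i) : Subgroup (Gpq h) where
  carrier := {x | ∃ s : ZMod (p * q), x.left = DihedralGroup.r ((q : ZMod (p * q)) * s)}
  one_mem' := ⟨0, by rw [mul_zero]; rfl⟩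
  mul_mem' := by
    rintro x y ⟨sx, hx⟩ ⟨sy, hy⟩
    refine ⟨sx + (h.unit ^ (toAdd x.right).val : (ZMod (p * q))ˣ) * sy, ?_⟩
    rw [SemidirectProduct.mul_left, hx, hy, h.phiG_r, DihedralGroup.r_mul_r]
    congr 1
    ring
  inv_mem' := by
    rintro x ⟨sx, hx⟩
    refine ⟨-((h.unit ^ (toAdd x.right⁻¹).val : (ZMod (p * q))ˣ) * sx), ?_⟩
    rw [SemidirectProduct.inv_left, hx, r_inv, h.phiG_r]
    congr 1
    ring

/-- The subgroup `N_p = {(a^{qs}, 1)}` of `G_{p,q}`. -/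
def NpSub (h : Hyp p q i) : Subgroup (Gpq h) where
  carrier := {x | x.right = 1 ∧ ∃ s : ZMod (p * q), x.left = DihedralGroup.r ((q : ZMod (p * q)) * s)}
  one_mem' := ⟨rfl, 0, by rw [mul_zero]; rfl⟩
  mul_mem' := by
    rintro x y ⟨hx1, sx, hx⟩ ⟨hy1, sy, hy⟩
    refine ⟨by rw [SemidirectProduct.mul_right, hx1, hy1, mul_one],
      sx + (h.unit ^ (toAdd x.right).val : (ZMod (p * q))ˣ) * sy, ?_⟩
    rw [SemidirectProduct.mul_left, hx, hy, h.phiG_r, DihedralGroup.r_mul_r]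
    congr 1
    ring
  inv_mem' := by
    rintro x ⟨hx1, sx, hx⟩
    refine ⟨by rw [SemidirectProduct.inv_right, hx1, inv_one],
      -((h.unit ^ (toAdd x.right⁻¹).val : (ZMod (p * q))ˣ) * sx), ?_⟩
    rw [SemidirectProduct.inv_left, hx, r_inv, h.phiG_r]
    congr 1
    ring

/-- The subgroup `N_q = {(a^{ps}, 1)}` of `G_{p,q}`. -/
def NqSub (h : Hyp p q i) : Subgroup (Gpq h) where
  carrier := {x | x.right = 1 ∧ ∃ s : ZMod (p * q), x.left = DihedralGroup.r ((p : ZMod (p * q)) * s)}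
  one_mem' := ⟨rfl, 0, by rw [mul_zero]; rfl⟩
  mul_mem' := by
    rintro x y ⟨hx1, sx, hx⟩ ⟨hy1, sy, hy⟩
    refine ⟨by rw [SemidirectProduct.mul_right, hx1, hy1, mul_one],
      sx + (h.unit ^ (toAdd x.right).val : (ZMod (p * q))ˣ) * sy, ?_⟩
    rw [SemidirectProduct.mul_left, hx, hy, h.phiG_r, DihedralGroup.r_mul_r]
    congr 1
    ring
  inv_mem' := by
    rintro x ⟨hx1, sx, hx⟩
    refine ⟨by rw [SemidirectProduct.inv_right, hx1, inv_one],
      -((h.unit ^ (toAdd x.right⁻¹).val : (ZMod (p * q))ˣ) * sx), ?_⟩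
    rw [SemidirectProduct.inv_left, hx, r_inv, h.phiG_r]
    congr 1
    ring

section Aux

variable {p q i : ℕ}

theorem zmodMulAut_pow_apply (n : ℕ) (u : (ZMod n)ˣ) (k : ℕ) (x : Multiplicative (ZMod n)) :
    ((zmodMulAut n u) ^ k) x = ofAdd (((u ^ k : (ZMod n)ˣ) : ZMod n) * toAdd x) := by
  induction k generalizing x with
  | zero => simp
  | succ k ih =>
    rw [pow_succ, MulAut.mul_apply]
    have h1 : (zmodMulAut n u) x = ofAdd ((u : ZMod n) * toAdd x) := rfl
    rw [h1, ih]
    congr 1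
    rw [toAdd_ofAdd, pow_succ, Units.val_mul, mul_assoc]

theorem Hyp.phiN_apply (h : Hyp p q i) (z : Multiplicative (ZMod q))
    (x : Multiplicative (ZMod (p * q))) :
    h.phiN z x
      = ofAdd (((h.unit ^ (toAdd z).val : (ZMod (p * q))ˣ) : ZMod (p * q)) * toAdd x) := by
  have h1 : h.phiN z = (zmodMulAut (p * q) h.unit) ^ (toAdd z).val := rfl
  rw [h1, zmodMulAut_pow_apply]

theorem Hyp.p_ne_q (h : Hyp p q i) : p ≠ q := by
  have h1 : 0 < p - 1 := by have := h.hp.two_le; omega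
  have := Nat.le_of_dvd h1 h.hdvd
  omega

theorem Hyp.one_le_i (h : Hyp p q i) : 1 ≤ i := by
  haveI : Fact p.Prime := ⟨h.hp⟩
  by_contra hi
  have hi0 : i = 0 := by omega
  have h1 : (i : ZMod p) ^ q = 1 := by rw [← h.hord]; exact pow_orderOf_eq_one _
  rw [hi0, Nat.cast_zero, zero_pow h.hq.ne_zero] at h1
  exact zero_ne_one h1

theorem Hyp.i_ne_one_modp (h : Hyp p q i) : (i : ZMod p) ≠ 1 := by
  intro hi
  have := h.hord
  rw [hi, orderOf_one] at this
  exact h.hq.one_lt.ne this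

theorem Hyp.q_dvd_sub (h : Hyp p q i) : q ∣ i - 1 :=
  (Nat.modEq_iff_dvd' h.one_le_i).mp h.hmod.symm

theorem Hyp.xi_ne_zero (h : Hyp p q i) : (i : ZMod (p * q)) - 1 ≠ 0 := by
  intro hx
  apply h.i_ne_one_modp
  have h1 : (i : ZMod (p * q)) = 1 := by linear_combination hx
  have h2 := congrArg (ZMod.castHom (dvd_mul_right p q) (ZMod p)) h1
  rwa [map_natCast, map_one] at h2

theorem Hyp.p_smul_xi (h : Hyp p q i) : p • ((i : ZMod (p * q)) - 1) = 0 := by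
  obtain ⟨t, ht⟩ := h.q_dvd_sub
  have h1 : (i : ZMod (p * q)) - 1 = ((i - 1 : ℕ) : ZMod (p * q)) := by
    rw [Nat.cast_sub h.one_le_i, Nat.cast_one]
  rw [h1, ht, nsmul_eq_mul]
  have h2 : (p : ZMod (p * q)) * ((q * t : ℕ) : ZMod (p * q))
      = ((p * q : ℕ) : ZMod (p * q)) * (t : ZMod (p * q)) := by push_cast; ring
  rw [h2, ZMod.natCast_self, zero_mul]

theorem Hyp.p_smul_of_cast_eq_zero (h : Hyp p q i) (w : ZMod (p * q))
    (hw : ZMod.castHom (dvd_mul_left q p) (ZMod q) w = 0) : p • w = 0 := by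
  haveI : NeZero (p * q) := ⟨Nat.mul_ne_zero h.hp.ne_zero h.hq.ne_zero⟩
  have hval2 : ((w.val : ℕ) : ZMod (p * q)) = w := ZMod.natCast_zmod_val w
  have h2 : ((w.val : ℕ) : ZMod q) = 0 := by
    rw [← map_natCast (ZMod.castHom (dvd_mul_left q p) (ZMod q)) w.val, hval2, hw]
  obtain ⟨t, ht⟩ := (ZMod.natCast_eq_zero_iff _ _).mp h2
  have h3 : p • w = ((p * w.val : ℕ) : ZMod (p * q)) := by
    rw [nsmul_eq_mul, Nat.cast_mul, hval2]
  rw [h3, ht, show p * (q * t) = (p * q) * t from by ring, Nat.cast_mul, ZMod.natCast_self,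
    zero_mul]

theorem Hyp.i_cast_q (h : Hyp p q i) : ((i : ℕ) : ZMod q) = 1 := by
  have := (ZMod.natCast_eq_natCast_iff i 1 q).mpr h.hmod
  simpa using this

/-- The reduction homomorphism `N_{pq²} →* C_q` reading off the left component mod `q`. -/
def Hyp.redHom (h : Hyp p q i) : Npq2 h →* Multiplicative (ZMod q) where
  toFun g := ofAdd (ZMod.castHom (dvd_mul_left q p) (ZMod q) (toAdd g.left))
  map_one' := by simp
  map_mul' g₁ g₂ := by
    have hleft : (g₁ * g₂).left = g₁.left * h.phiN g₁.right g₂.left := rfl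
    show ofAdd (ZMod.castHom (dvd_mul_left q p) (ZMod q) (toAdd (g₁ * g₂).left)) =
      ofAdd (ZMod.castHom (dvd_mul_left q p) (ZMod q) (toAdd g₁.left)) *
        ofAdd (ZMod.castHom (dvd_mul_left q p) (ZMod q) (toAdd g₂.left))
    rw [hleft, ← ofAdd_add]
    congr 1
    rw [toAdd_mul, map_add, h.phiN_apply, toAdd_ofAdd, map_mul]
    have hu : (ZMod.castHom (dvd_mul_left q p) (ZMod q))
        ((h.unit ^ (toAdd g₁.right).val : (ZMod (p * q))ˣ) : ZMod (p * q)) = 1 := by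
      rw [Units.val_pow_eq_pow_val, map_pow]
      have : ((h.unit : ZMod (p * q)) : ZMod (p * q)) = ((i : ℕ) : ZMod (p * q)) :=
        ZMod.coe_unitOfCoprime i h.coprime
      rw [this, map_natCast, h.i_cast_q, one_pow]
    rw [hu, one_mul]

theorem Hyp.pow_pq_eq_one (h : Hyp p q i) (g : Npq2 h) : g ^ (p * q) = 1 := by
  haveI : NeZero q := ⟨h.hq.ne_zero⟩
  have hq_pow : ∀ x : Multiplicative (ZMod q), x ^ q = 1 := fun x => by
    rw [← ofAdd_toAdd x, ← ofAdd_nsmul, nsmul_eq_mul, ZMod.natCast_self, zero_mul, ofAdd_zero]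
  have hr : g ^ q ∈ MonoidHom.ker (SemidirectProduct.rightHom
      (φ := h.phiN)) := by
    rw [MonoidHom.mem_ker, map_pow]
    exact hq_pow _
  rw [← SemidirectProduct.range_inl_eq_ker_rightHom] at hr
  obtain ⟨w, hw⟩ := hr
  have hf : h.redHom (g ^ q) = 1 := by
    rw [map_pow]
    exact hq_pow _
  have hcast : ZMod.castHom (dvd_mul_left q p) (ZMod q) (toAdd w) = 0 := by
    rw [← hw] at hf
    have : h.redHom (SemidirectProduct.inl w)
        = ofAdd (ZMod.castHom (dvd_mul_left q p) (ZMod q) (toAdd w)) := rfl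
    rw [this] at hf
    exact ofAdd_eq_one.mp hf
  have hps : w ^ p = 1 := by
    rw [← ofAdd_toAdd w, ← ofAdd_nsmul, h.p_smul_of_cast_eq_zero _ hcast, ofAdd_zero]
  calc g ^ (p * q) = (g ^ q) ^ p := pow_mul' g p q
    _ = SemidirectProduct.inl (w ^ p) := by rw [← hw, ← map_pow]
    _ = 1 := by rw [hps, map_one]

theorem Hyp.card_Npq2 (h : Hyp p q i) : Nat.card (Npq2 h) = p * q * q := by
  have e : Npq2 h ≃ (Multiplicative (ZMod (p * q))) × Multiplicative (ZMod q) :=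
    ⟨fun g => (g.left, g.right), fun x => ⟨x.1, x.2⟩, fun g => rfl, fun x => rfl⟩
  rw [Nat.card_congr e, Nat.card_prod, Nat.card_congr Multiplicative.toAdd,
    Nat.card_congr Multiplicative.toAdd, Nat.card_zmod, Nat.card_zmod]

theorem Hyp.finite_Npq2 (h : Hyp p q i) : Finite (Npq2 h) := by
  haveI : NeZero q := ⟨h.hq.ne_zero⟩
  haveI : NeZero (p * q) := ⟨Nat.mul_ne_zero h.hp.ne_zero h.hq.ne_zero⟩
  have e : Npq2 h ≃ (Multiplicative (ZMod (p * q))) × Multiplicative (ZMod q) :=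
    ⟨fun g => (g.left, g.right), fun x => ⟨x.1, x.2⟩, fun g => rfl, fun x => rfl⟩
  exact Finite.of_equiv _ e.symm

end Aux

end Mizerka

open scoped commutatorElement

open Mizerka in
/-- Neither `N_{pq²}` nor `D_{2pq}` has a normal subgroup of prime power
order (including the trivial subgroup, of order `ℓ⁰ = 1`) with cyclic quotient. -/
theorem statement_18 {p q i : ℕ} (h : Hyp p q i) :
    (∀ P : Subgroup (Npq2 h), ∀ hP : P.Normal,
      (∃ ℓ k : ℕ, Nat.Prime ℓ ∧ Nat.card P = ℓ ^ k) →
        ¬ (haveI := hP; IsCyclic (Npq2 h ⧸ P))) ∧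
    (∀ P : Subgroup (DihedralGroup (p * q)), ∀ hP : P.Normal,
      (∃ ℓ k : ℕ, Nat.Prime ℓ ∧ Nat.card P = ℓ ^ k) →
        ¬ (haveI := hP; IsCyclic (DihedralGroup (p * q) ⧸ P))) := by
  have hq1 : 1 < q := h.hq.one_lt
  have hp1 : 1 < p := h.hp.one_lt
  have hpq : p ≠ q := h.p_ne_q
  haveI : NeZero q := ⟨h.hq.ne_zero⟩
  haveI : NeZero (p * q) := ⟨Nat.mul_ne_zero h.hp.ne_zero h.hq.ne_zero⟩
  haveI : Fact (1 < q) := ⟨hq1⟩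
  haveI : Fact p.Prime := ⟨h.hp⟩
  constructor
  · rintro P hP ⟨ℓ, k, hℓ, hcard⟩ hcyc
    haveI := hP
    haveI : IsCyclic (Npq2 h ⧸ P) := hcyc
    letI : CommGroup (Npq2 h ⧸ P) := IsCyclic.commGroup
    set x : Npq2 h := ⁅cN h, aN h⁆ with hxdef
    have hxP : x ∈ P := by
      have hcomm : (QuotientGroup.mk' P) x = 1 := by
        rw [hxdef, map_commutatorElement]
        exact commutatorElement_eq_one_iff_mul_comm.mpr (mul_comm _ _)
      rw [QuotientGroup.mk'_apply] at hcomm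
      exact (QuotientGroup.eq_one_iff x).mp hcomm
    have hxval : x = SemidirectProduct.inl (ofAdd ((i : ZMod (p * q)) - 1)) := by
      rw [hxdef, commutatorElement_def]
      show SemidirectProduct.inr (ofAdd 1) * SemidirectProduct.inl (ofAdd 1) *
        (SemidirectProduct.inr (ofAdd 1))⁻¹ * (SemidirectProduct.inl (ofAdd 1))⁻¹ = _
      rw [← map_inv, ← SemidirectProduct.inl_aut, ← map_inv, ← map_mul]
      congr 1
      rw [h.phiN_apply]
      have hval1 : (toAdd (ofAdd (1 : ZMod q))).val = 1 := by
        rw [toAdd_ofAdd, ZMod.val_one]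
      rw [hval1, pow_one]
      have hu : ((h.unit : (ZMod (p * q))ˣ) : ZMod (p * q)) = ((i : ℕ) : ZMod (p * q)) :=
        ZMod.coe_unitOfCoprime i h.coprime
      rw [hu, toAdd_ofAdd, mul_one, ← ofAdd_neg, ← ofAdd_add, sub_eq_add_neg]
    have hxne : x ≠ 1 := by
      rw [hxval]
      intro hcontra
      have := SemidirectProduct.inl_injective (hcontra.trans (map_one _).symm)
      exact h.xi_ne_zero (ofAdd_eq_one.mp this)
    have hxp : x ^ p = 1 := by
      rw [hxval, ← map_pow, ← ofAdd_nsmul, h.p_smul_xi, ofAdd_zero, map_one]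
    have hordx : orderOf x = p := orderOf_eq_prime hxp hxne
    have hdvd1 : p ∣ ℓ ^ k := by
      have h5 := P.orderOf_dvd_natCard hxP
      rwa [hordx, hcard] at h5
    have hℓp : ℓ = p :=
      ((Nat.prime_dvd_prime_iff_eq h.hp hℓ).mp (h.hp.dvd_of_dvd_pow hdvd1)).symm
    haveI : Finite (Npq2 h) := h.finite_Npq2
    have hquot := Subgroup.card_eq_card_quotient_mul_card_subgroup P
    have hcop : Nat.Coprime (q * q) (ℓ ^ k) := by
      rw [hℓp]
      have hqp : Nat.Coprime q p := (Nat.coprime_primes h.hq h.hp).mpr (Ne.symm hpq)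
      exact (hqp.mul hqp).pow_right k
    have hdvd2 : q * q ∣ Nat.card (Npq2 h ⧸ P) := by
      apply hcop.dvd_of_dvd_mul_right
      rw [← hcard, ← hquot, h.card_Npq2]
      exact ⟨p, by ring⟩
    obtain ⟨y, hy⟩ := IsCyclic.exists_generator (α := Npq2 h ⧸ P)
    have hordy : orderOf y = Nat.card (Npq2 h ⧸ P) :=
      orderOf_eq_card_of_forall_mem_zpowers hy
    obtain ⟨g, hg⟩ := QuotientGroup.mk'_surjective P y
    have hy1 : y ^ (p * q) = 1 := by
      rw [← hg, ← map_pow, h.pow_pq_eq_one g, map_one]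
    have hody : orderOf y ∣ p * q := orderOf_dvd_of_pow_eq_one hy1
    have hqq : q * q ∣ p * q := dvd_trans (hordy ▸ hdvd2) hody
    have hqp2 : q ∣ p := (Nat.mul_dvd_mul_iff_right (show 0 < q by omega)).mp hqq
    exact hpq ((Nat.prime_dvd_prime_iff_eq h.hq h.hp).mp hqp2).symm
  · rintro P hP ⟨ℓ, k, hℓ, hcard⟩ hcyc
    haveI := hP
    haveI : IsCyclic (DihedralGroup (p * q) ⧸ P) := hcyc
    letI : CommGroup (DihedralGroup (p * q) ⧸ P) := IsCyclic.commGroup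
    set x : DihedralGroup (p * q) := ⁅(DihedralGroup.sr 0 : DihedralGroup (p * q)), DihedralGroup.r 1⁆ with hxdef
    have hxP : x ∈ P := by
      have hcomm : (QuotientGroup.mk' P) x = 1 := by
        rw [hxdef, map_commutatorElement]
        exact commutatorElement_eq_one_iff_mul_comm.mpr (mul_comm _ _)
      rw [QuotientGroup.mk'_apply] at hcomm
      exact (QuotientGroup.eq_one_iff x).mp hcomm
    have h4pq : 4 ≤ p * q := Nat.mul_le_mul h.hp.two_le h.hq.two_le
    have hoddpq : Odd (p * q) := h.hoddp.mul h.hoddq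
    have hsrinv : (DihedralGroup.sr (0 : ZMod (p * q)))⁻¹ = DihedralGroup.sr 0 :=
      inv_eq_of_mul_eq_one_right (DihedralGroup.sr_mul_self 0)
    have hrinv : (DihedralGroup.r (1 : ZMod (p * q)))⁻¹ = DihedralGroup.r (-1) :=
      inv_eq_of_mul_eq_one_right (by
        rw [DihedralGroup.r_mul_r, add_neg_cancel, DihedralGroup.one_def])
    have hxval : x = DihedralGroup.r (-2) := by
      rw [hxdef, commutatorElement_def, hsrinv, hrinv, DihedralGroup.sr_mul_r,
        DihedralGroup.sr_mul_sr, DihedralGroup.r_mul_r]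
      congr 1
      ring
    have hordx : orderOf x = p * q := by
      have h2 : (-2 : ZMod (p * q)) = (((p * q - 2 : ℕ)) : ZMod (p * q)) := by
        rw [Nat.cast_sub (by omega), ZMod.natCast_self, zero_sub]
        norm_num
      have hg1 : Nat.gcd (p * q) (p * q - 2) = 1 := by
        have hd2 : Nat.gcd (p * q) (p * q - 2) ∣ 2 := by
          have := Nat.dvd_sub (Nat.gcd_dvd_left (p * q) (p * q - 2))
            (Nat.gcd_dvd_right (p * q) (p * q - 2))
          rwa [show p * q - (p * q - 2) = 2 from by omega] at this
        rcases (Nat.dvd_prime Nat.prime_two).mp hd2 with h1 | h1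
        · exact h1
        · exfalso
          have h2d : (2 : ℕ) ∣ p * q := h1 ▸ Nat.gcd_dvd_left _ _
          rw [Nat.odd_iff] at hoddpq
          omega
      rw [hxval, h2, ← DihedralGroup.r_one_pow, orderOf_pow, DihedralGroup.orderOf_r_one,
        hg1, Nat.div_one]
    have hdvd1 : p * q ∣ ℓ ^ k := by
      have h5 := P.orderOf_dvd_natCard hxP
      rwa [hordx, hcard] at h5
    have hpℓ : p = ℓ := (Nat.prime_dvd_prime_iff_eq h.hp hℓ).mp
      (h.hp.dvd_of_dvd_pow (dvd_trans (dvd_mul_right p q) hdvd1))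
    have hqℓ : q = ℓ := (Nat.prime_dvd_prime_iff_eq h.hq hℓ).mp
      (h.hq.dvd_of_dvd_pow (dvd_trans (dvd_mul_left q p) hdvd1))
    exact hpq (hpℓ.trans hqℓ.symm)
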